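/- In a graph product with shortlex ordering compatible with a total order on vertices, for any subset V' of the vertex set, the shortlex normal forms of G_V lying in X_{V'}^* are exactly the shortlex normal forms of the subgraph product G_{V'}: SL(G_V, X_V) \cap X_{V'}^* = SL(G_{V'}, X_{V'}). -/

import Mathlib

/-- Word length of `g` over a generating subset `X` of a group. -/
noncomputable def wlen {G : Type*} [Group G] (X : Set G) (g : G) : ℕ :=
  sInf {n | ∃ w : List G, w.length = n ∧ (∀ x ∈ w, x ∈ X) ∧ w.prod = g}

/-- The defining commutator relators of a graph product. -/
def gpRels {V : Type*} (Γ : SimpleGraph V) (G : V → Type*) [∀ v, Group (G v)] :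
    Set (Monoid.CoprodI G) :=
  {x | ∃ (v w : V) (a : G v) (b : G w), Γ.Adj v w ∧
    x = Monoid.CoprodI.of a * Monoid.CoprodI.of b *
          (Monoid.CoprodI.of a)⁻¹ * (Monoid.CoprodI.of b)⁻¹}

/-- The graph product of the groups `G v` over the graph `Γ`. -/
abbrev GraphProduct {V : Type*} (Γ : SimpleGraph V) (G : V → Type*) [∀ v, Group (G v)] :
    Type _ :=
  Monoid.CoprodI G ⧸ Subgroup.normalClosure (gpRels Γ G)

/-- The canonical homomorphism from a vertex group into the graph product. -/
def GraphProduct.of {V : Type*} (Γ : SimpleGraph V) (G : V → Type*) [∀ v, Group (G v)]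
    (v : V) : G v →* GraphProduct Γ G :=
  (QuotientGroup.mk' _).comp Monoid.CoprodI.of

/-- The generating set `X_S = ∪_{v ∈ S} X_v` inside the graph product. -/
def XS {V : Type*} (Γ : SimpleGraph V) (G : V → Type*) [∀ v, Group (G v)]
    (X : ∀ v, Set (G v)) (S : Set V) : Set (GraphProduct Γ G) :=
  ⋃ v ∈ S, (GraphProduct.of Γ G v) '' (X v)

/-- The alphabet of letters: a vertex together with a generator of its vertex group. -/
abbrev GPLetter {V : Type*} (G : V → Type*) (X : ∀ v, Set (G v)) : Type _ :=
  Σ v : V, {x : G v // x ∈ X v}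

/-- Evaluation of a word over the alphabet in the graph product. -/
def evalWord {V : Type*} (Γ : SimpleGraph V) (G : V → Type*) [∀ v, Group (G v)]
    (X : ∀ v, Set (G v)) (w : List (GPLetter G X)) : GraphProduct Γ G :=
  (w.map fun a => GraphProduct.of Γ G a.1 a.2.1).prod

/-- The shortlex order on words induced by a strict order `lt` on letters:
shorter words come first, and words of equal length are compared lexicographically. -/
def shortlex {A : Type*} (lt : A → A → Prop) (w u : List A) : Prop :=
  w.length < u.length ∨ (w.length = u.length ∧ List.Lex lt w u)

/-- The order on letters compatible with the total order on `V`: letters with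
smaller support come first, letters with the same support are compared by `r`. -/
def letterLt {V : Type*} [LinearOrder V] (G : V → Type*) (X : ∀ v, Set (G v))
    (r : ∀ v, {x : G v // x ∈ X v} → {x : G v // x ∈ X v} → Prop) :
    GPLetter G X → GPLetter G X → Prop :=
  Sigma.Lex (· < ·) r

/-- The shortlex normal forms of the subgraph product `G_{V'}`: words over the
sub-alphabet `X_{V'}` that are shortlex-least among all words over `X_{V'}`
representing the same element. -/
def SLwords {V : Type*} [LinearOrder V] (Γ : SimpleGraph V) (G : V → Type*)
    [∀ v, Group (G v)] (X : ∀ v, Set (G v))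
    (r : ∀ v, {x : G v // x ∈ X v} → {x : G v // x ∈ X v} → Prop)
    (V' : Set V) : Set (List (GPLetter G X)) :=
  {w | (∀ a ∈ w, a.1 ∈ V') ∧
    ∀ u : List (GPLetter G X), (∀ a ∈ u, a.1 ∈ V') →
      evalWord Γ G X u = evalWord Γ G X w → u = w ∨ shortlex (letterLt G X r) w u}

lemma gp_comm_rel {V : Type*} (Γ : SimpleGraph V) (G : V → Type*) [∀ v, Group (G v)]
    {v w : V} (hadj : Γ.Adj v w) (a : G v) (b : G w) :
    GraphProduct.of Γ G v a * GraphProduct.of Γ G w b * (GraphProduct.of Γ G v a)⁻¹ *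
      (GraphProduct.of Γ G w b)⁻¹ = 1 := by
  have hmem : (Monoid.CoprodI.of a * Monoid.CoprodI.of b * (Monoid.CoprodI.of a)⁻¹ *
      (Monoid.CoprodI.of b)⁻¹ : Monoid.CoprodI G) ∈ Subgroup.normalClosure (gpRels Γ G) :=
    Subgroup.subset_normalClosure ⟨v, w, a, b, hadj, rfl⟩
  have h1 : (QuotientGroup.mk' (Subgroup.normalClosure (gpRels Γ G)))
      (Monoid.CoprodI.of a * Monoid.CoprodI.of b * (Monoid.CoprodI.of a)⁻¹ *
        (Monoid.CoprodI.of b)⁻¹) = 1 := (QuotientGroup.eq_one_iff _).mpr hmem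
  simpa [GraphProduct.of, map_mul, map_inv] using h1

open Classical in
/-- The retraction of the graph product killing the vertex groups outside `V'`. -/
noncomputable def gpRetr {V : Type*} (Γ : SimpleGraph V) (G : V → Type*) [∀ v, Group (G v)]
    (V' : Set V) : GraphProduct Γ G →* GraphProduct Γ G :=
  QuotientGroup.lift _
    (Monoid.CoprodI.lift fun v => if v ∈ V' then GraphProduct.of Γ G v else 1) (by
      intro x hx
      refine MonoidHom.mem_ker.mp (Subgroup.normalClosure_le_normal ?_ hx)
      rintro y ⟨v, w, a, b, hadj, rfl⟩
      simp only [SetLike.mem_coe, MonoidHom.mem_ker, map_mul, map_inv,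
        Monoid.CoprodI.lift_of]
      by_cases hv : v ∈ V' <;> by_cases hw : w ∈ V' <;>
        simp [hv, hw, gp_comm_rel Γ G hadj a b])

open Classical in
lemma gpRetr_of {V : Type*} (Γ : SimpleGraph V) (G : V → Type*) [∀ v, Group (G v)]
    (V' : Set V) (v : V) (x : G v) :
    gpRetr Γ G V' (GraphProduct.of Γ G v x) =
      if v ∈ V' then GraphProduct.of Γ G v x else 1 := by
  show gpRetr Γ G V' (QuotientGroup.mk (Monoid.CoprodI.of x)) = _
  show (Monoid.CoprodI.lift fun v => if v ∈ V' then GraphProduct.of Γ G v else 1)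
      (Monoid.CoprodI.of x) = _
  rw [Monoid.CoprodI.lift_of]
  split_ifs <;> simp

open Classical in
lemma gpRetr_evalWord {V : Type*} (Γ : SimpleGraph V) (G : V → Type*) [∀ v, Group (G v)]
    (X : ∀ v, Set (G v)) (V' : Set V) (u : List (GPLetter G X)) :
    gpRetr Γ G V' (evalWord Γ G X u) =
      evalWord Γ G X (u.filter fun a => decide (a.1 ∈ V')) := by
  induction u with
  | nil => simp [evalWord]
  | cons a u ih =>
    have h1 : evalWord Γ G X (a :: u) = GraphProduct.of Γ G a.1 a.2.1 * evalWord Γ G X u := by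
      simp [evalWord]
    rw [h1, map_mul, ih, gpRetr_of, List.filter_cons]
    by_cases h : a.1 ∈ V' <;> simp [h, evalWord]

/-- In a graph product over a finite simple graph with shortlex ordering compatible
with a total order on the vertices, for any `V' ⊆ V` the shortlex normal forms of
`G_V` lying in `X_{V'}^*` are exactly the shortlex normal forms of the subgraph
product: `SL(G_V, X_V) ∩ X_{V'}^* = SL(G_{V'}, X_{V'})`. -/
theorem shortlexNormalForms_subgraphProduct {V : Type*} [Fintype V] [LinearOrder V]
    (Γ : SimpleGraph V) (G : V → Type*) [∀ v, Group (G v)] (X : ∀ v, Set (G v))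
    (hinv : ∀ v, ∀ x ∈ X v, x⁻¹ ∈ X v)
    (hgen : ∀ v, Subgroup.closure (X v) = ⊤)
    (r : ∀ v, {x : G v // x ∈ X v} → {x : G v // x ∈ X v} → Prop)
    (hr : ∀ v, IsStrictTotalOrder {x : G v // x ∈ X v} (r v))
    (V' : Set V) :
    {w | w ∈ SLwords Γ G X r Set.univ ∧ ∀ a ∈ w, a.1 ∈ V'}
      = SLwords Γ G X r V' := by
  classical
  ext w
  simp only [Set.mem_setOf_eq, SLwords]
  constructor
  · rintro ⟨⟨-, hmin⟩, hw⟩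
    exact ⟨hw, fun u hu hequ => hmin u (fun a _ => Set.mem_univ _) hequ⟩
  · rintro ⟨hw, hmin⟩
    refine ⟨⟨fun a _ => Set.mem_univ _, ?_⟩, hw⟩
    intro u _ hequ
    set u' := u.filter (fun a => decide (a.1 ∈ V')) with hu'def
    have hu' : ∀ a ∈ u', a.1 ∈ V' := by
      intro a ha
      have := (List.mem_filter.mp ha).2
      simpa using this
    have hwfix : w.filter (fun a => decide (a.1 ∈ V')) = w :=
      List.filter_eq_self.mpr (fun a ha => by simpa using hw a ha)
    have heq' : evalWord Γ G X u' = evalWord Γ G X w := by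
      rw [hu'def, ← gpRetr_evalWord, hequ, gpRetr_evalWord, hwfix]
    have hsub : u'.Sublist u := List.filter_sublist (l := u)
    have hlen : u'.length ≤ u.length := hsub.length_le
    have hcase := hmin u' hu' heq'
    rcases eq_or_lt_of_le hlen with h | h
    · have : u' = u := hsub.eq_of_length h
      rwa [this] at hcase
    · right
      left
      have hwle : w.length ≤ u'.length := by
        rcases hcase with rfl | hsl
        · exact le_refl _
        · rcases hsl with h1 | ⟨h1, -⟩
          · exact le_of_lt h1
          · exact le_of_eq h1
      exact lt_of_le_of_lt hwle h
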